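/- Let R be a commutative Noetherian ring and a an ideal of R. (i) Any submodule of an a-adically separated R-module is a-adically separated. (ii) Any homomorphic image of an a-adically quasi-complete R-module is a-adically quasi-complete. -/

import Mathlib

universe u

/-- (i) A submodule of an `a`-adically separated module is `a`-adically separated.
(ii) A homomorphic image of an `a`-adically quasi-complete module is `a`-adically
quasi-complete.  Here `M` is separated (resp. quasi-complete) iff the completion map
`M → lim M/aⁿM` is injective (resp. surjective). -/
theorem separated_submodule_and_quasiComplete_image
    {R : Type u} [CommRing R] [IsNoetherianRing R] (a : Ideal R) :
    (∀ (M : Type u) [AddCommGroup M] [Module R M],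
      Function.Injective (AdicCompletion.of a M) →
      ∀ N : Submodule R M, Function.Injective (AdicCompletion.of a N)) ∧
    (∀ (M : Type u) [AddCommGroup M] [Module R M]
      (N : Type u) [AddCommGroup N] [Module R N] (f : M →ₗ[R] N),
      Function.Surjective f →
      Function.Surjective (AdicCompletion.of a M) →
      Function.Surjective (AdicCompletion.of a N)) := by
  constructor
  · intro M _ _ hM N
    rw [injective_iff_map_eq_zero]
    intro x hx
    have hxn : ∀ n : ℕ, x ∈ (a ^ n • ⊤ : Submodule R N) := by
      intro n
      have h1 : (AdicCompletion.of a N x).1 n = 0 := by rw [hx]; rfl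
      rw [AdicCompletion.of_apply] at h1
      simpa [Submodule.Quotient.mk_eq_zero] using h1
    have hxM : (AdicCompletion.of a M) (x : M) = 0 := by
      ext n
      rw [AdicCompletion.of_apply]
      simp only [AdicCompletion.val_zero]
      rw [Submodule.mkQ_apply, Pi.zero_apply, Submodule.Quotient.mk_eq_zero]
      have : (x : M) ∈ Submodule.map N.subtype (a ^ n • ⊤ : Submodule R N) :=
        Submodule.mem_map_of_mem (hxn n)
      rw [Submodule.map_smul''] at this
      exact Submodule.smul_mono le_rfl le_top this
    have : (x : M) = 0 := hM (by simpa using hxM)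
    exact Subtype.ext this
  · intro M _ _ N _ _ f hf hM y
    obtain ⟨z, hz⟩ := AdicCompletion.map_surjective a hf y
    obtain ⟨m, hm⟩ := hM z
    refine ⟨f m, ?_⟩
    have : AdicCompletion.map a f (AdicCompletion.of a M m) =
        AdicCompletion.of a N (f m) :=
      AdicCompletion.ext fun n => rfl
    rw [← this, hm, hz]
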